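/- Let S be an n×n real symmetric positive definite matrix and G an n×m real matrix of full column rank, and set P := I − G (Gᵀ S G)⁻¹ Gᵀ S. Then P S⁻¹ = S⁻¹ Pᵀ = P S⁻¹ Pᵀ = S⁻¹ − G (Gᵀ S G)⁻¹ Gᵀ; in particular P S⁻¹ is symmetric. -/

import Mathlib

open Matrix

lemma posdef_conj_inj {n m : Type*} [Fintype n] [Fintype m]
    (S : Matrix n n ℝ) (G : Matrix n m ℝ) (hS : S.PosDef)
    (hG : Function.Injective G.mulVec) : (Gᵀ * S * G).PosDef := by
  have hGH : Gᴴ = Gᵀ := conjTranspose_eq_transpose_of_trivial G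
  refine PosDef.of_dotProduct_mulVec_pos (hGH ▸ isHermitian_conjTranspose_mul_mul G hS.isHermitian) fun x hx => ?_
  have hGx : G *ᵥ x ≠ 0 := fun h => hx (hG (by simpa using h))
  have := hS.dotProduct_mulVec_pos hGx
  simpa [star_trivial, ← mulVec_mulVec, dotProduct_mulVec, vecMul_transpose] using this

/-- For `S` symmetric positive definite and `G` injective, with
`P := 1 − G (Gᵀ S G)⁻¹ Gᵀ S`, we have
`P S⁻¹ = S⁻¹ Pᵀ = P S⁻¹ Pᵀ = S⁻¹ − G (Gᵀ S G)⁻¹ Gᵀ`; in particular `P S⁻¹` is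
symmetric. -/
theorem stmt_11 {n m : Type*} [Fintype n] [Fintype m] [DecidableEq n] [DecidableEq m]
    (S : Matrix n n ℝ) (G : Matrix n m ℝ)
    (hSsym : Sᵀ = S) (hS : S.PosDef)
    (hG : Function.Injective G.mulVec) :
    let P : Matrix n n ℝ := 1 - G * (Gᵀ * S * G)⁻¹ * Gᵀ * S
    P * S⁻¹ = S⁻¹ * Pᵀ ∧
    P * S⁻¹ = P * S⁻¹ * Pᵀ ∧
    P * S⁻¹ = S⁻¹ - G * (Gᵀ * S * G)⁻¹ * Gᵀ ∧
    (P * S⁻¹)ᵀ = P * S⁻¹ := by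
  intro P
  set M : Matrix m m ℝ := (Gᵀ * S * G)⁻¹ with hM
  have hK : (Gᵀ * S * G).PosDef := posdef_conj_inj S G hS hG
  have hKunit : IsUnit (Gᵀ * S * G).det := isUnit_iff_isUnit_det _ |>.1 hK.isUnit
  have hSunit : IsUnit S.det := isUnit_iff_isUnit_det _ |>.1 hS.isUnit
  have hSS : S * S⁻¹ = 1 := mul_nonsing_inv S hSunit
  have hSS' : S⁻¹ * S = 1 := nonsing_inv_mul S hSunit
  have hMK : M * (Gᵀ * S * G) = 1 := nonsing_inv_mul _ hKunit
  have hKM : (Gᵀ * S * G) * M = 1 := mul_nonsing_inv _ hKunit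
  have hMsym : Mᵀ = M := by
    rw [hM, transpose_nonsing_inv]
    congr 1
    simp [transpose_mul, hSsym, Matrix.mul_assoc]
  have hSinvsym : S⁻¹ᵀ = S⁻¹ := by rw [transpose_nonsing_inv, hSsym]
  have hPT : Pᵀ = 1 - S * G * M * Gᵀ := by
    show (1 - G * M * Gᵀ * S)ᵀ = _
    simp [transpose_mul, hSsym, hMsym, Matrix.mul_assoc]
  have key : P * S⁻¹ = S⁻¹ - G * M * Gᵀ := by
    show (1 - G * M * Gᵀ * S) * S⁻¹ = _
    rw [Matrix.sub_mul, Matrix.one_mul, Matrix.mul_assoc (G * M * Gᵀ), hSS, Matrix.mul_one]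
  have key2 : S⁻¹ * Pᵀ = S⁻¹ - G * M * Gᵀ := by
    rw [hPT, Matrix.mul_sub, Matrix.mul_one, ← Matrix.mul_assoc, ← Matrix.mul_assoc,
      ← Matrix.mul_assoc, hSS', Matrix.one_mul]
  refine ⟨key.trans key2.symm, ?_, key, by rw [key, transpose_sub, hSinvsym]; simp [transpose_mul, hMsym, Matrix.mul_assoc]⟩
  rw [key, hPT]
  rw [Matrix.mul_sub, Matrix.mul_one, Matrix.sub_mul]
  have h1 : S⁻¹ * (S * G * M * Gᵀ) = G * M * Gᵀ := by
    rw [show S * G * M * Gᵀ = S * (G * M * Gᵀ) by simp [Matrix.mul_assoc],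
      ← Matrix.mul_assoc, hSS', Matrix.one_mul]
  have h2 : G * M * Gᵀ * (S * G * M * Gᵀ) = G * M * Gᵀ := by
    calc G * M * Gᵀ * (S * G * M * Gᵀ) = G * (M * (Gᵀ * S * G)) * (M * Gᵀ) := by
          simp [Matrix.mul_assoc]
      _ = G * M * Gᵀ := by rw [hMK]; simp [Matrix.mul_assoc]
  rw [h1, h2]
  abel
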